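/- For every real number x > 0, log x = ∫₀¹ ((1 - t + t·x⁻¹)⁻¹ - 1)/t dt. -/

import Mathlib

theorem stmt_0 (x : ℝ) (hx : 0 < x) :
    Real.log x = ∫ t in (0:ℝ)..1, ((1 - t + t * x⁻¹)⁻¹ - 1) / t := by
  set a : ℝ := x⁻¹ with ha
  have ha0 : 0 < a := inv_pos.mpr hx
  have hpos : ∀ t ∈ Set.Icc (0:ℝ) 1, 0 < 1 - t + t * a := by
    intro t ht
    rcases ht with ⟨h0, h1⟩
    rcases h1.lt_or_eq with h | h
    · nlinarith [mul_nonneg h0 ha0.le]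
    · subst h; simpa using ha0
  -- First: the integral of the given integrand equals the integral of (1-a)/(1-t+t*a)
  have hcongr : (∫ t in (0:ℝ)..1, ((1 - t + t * a)⁻¹ - 1) / t)
      = ∫ t in (0:ℝ)..1, (1 - a) / (1 - t + t * a) := by
    rw [intervalIntegral.integral_of_le (by norm_num : (0:ℝ) ≤ 1),
        intervalIntegral.integral_of_le (by norm_num : (0:ℝ) ≤ 1)]
    apply MeasureTheory.setIntegral_congr_fun measurableSet_Ioc
    intro t ht
    have htpos : 0 < t := ht.1
    have hden : 0 < 1 - t + t * a := hpos t ⟨le_of_lt ht.1, ht.2⟩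
    field_simp
    ring
  rw [hcongr]
  have hderiv : ∀ t ∈ Set.uIcc (0:ℝ) 1,
      HasDerivAt (fun s => -Real.log (1 - s + s * a)) ((1 - a) / (1 - t + t * a)) t := by
    intro t ht
    rw [Set.uIcc_of_le (by norm_num : (0:ℝ) ≤ 1)] at ht
    have hden := hpos t ht
    have h1 : HasDerivAt (fun s : ℝ => 1 - s + s * a) (-1 + a) t := by
      have := ((hasDerivAt_id t).const_sub 1).add ((hasDerivAt_id t).mul_const a)
      exact this.congr_deriv (by ring)
    have h2 := (h1.log (ne_of_gt hden)).neg
    exact h2.congr_deriv (by ring)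
  have hcont : IntervalIntegrable (fun t => (1 - a) / (1 - t + t * a))
      MeasureTheory.volume 0 1 := by
    apply ContinuousOn.intervalIntegrable
    apply ContinuousOn.div continuousOn_const
    · fun_prop
    · intro t ht
      rw [Set.uIcc_of_le (by norm_num : (0:ℝ) ≤ 1)] at ht
      exact ne_of_gt (hpos t ht)
  rw [intervalIntegral.integral_eq_sub_of_hasDerivAt hderiv hcont]
  simp [Real.log_inv, ha]
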